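/- Let Γ = (V,E) be a reduced finite simple graph with vertex set {1,…,n} and adjacency matrix A, and let ψ be a permutation of {1,…,n}. Then the following are equivalent: (i) there exists a finite simple graph Γ_ψ with adjacency matrix A · m_ψ; (ii) ψ ∈ Ant(Γ) and (v, ψ(v)) ∉ E for every vertex v. Moreover, if Γ_ψ exists, then Γ_ψ is reduced and two-fold isomorphic to Γ. -/

import Mathlib

open SimpleGraph

/-- A graph is reduced (vertex determining) if distinct vertices have distinct
open neighborhoods. -/
def Reduced {V : Type*} (G : SimpleGraph V) : Prop :=
  ∀ u v : V, G.neighborSet u = G.neighborSet v → u = v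

/-- The group of two-fold projections of a graph: permutations mapping every
open neighborhood onto some open neighborhood. -/
def autPi {V : Type*} [Fintype V] (G : SimpleGraph V) : Subgroup (Equiv.Perm V) where
  carrier := {π : Equiv.Perm V | ∀ v : V, ∃ w : V, π '' G.neighborSet v = G.neighborSet w}
  one_mem' := by
    intro v
    exact ⟨v, by simp⟩
  mul_mem' := by
    intro a b ha hb v
    obtain ⟨w, hw⟩ := hb v
    obtain ⟨u, hu⟩ := ha w
    refine ⟨u, ?_⟩
    rw [Equiv.Perm.coe_mul, Set.image_comp, hw, hu]
  inv_mem' := by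
    intro a ha v
    have hfin : (Set.range G.neighborSet).Finite := Set.finite_range _
    have hmaps : Set.MapsTo (Set.image ⇑a) (Set.range G.neighborSet)
        (Set.range G.neighborSet) := by
      rintro s ⟨u, rfl⟩
      obtain ⟨w, hw⟩ := ha u
      exact ⟨w, hw.symm⟩
    have hinj : Set.InjOn (Set.image ⇑a) (Set.range G.neighborSet) :=
      (Set.image_injective.mpr a.injective).injOn
    have hbij := (hfin.injOn_iff_bijOn_of_mapsTo hmaps).mp hinj
    obtain ⟨s, hs, hsv⟩ := hbij.surjOn ⟨v, rfl⟩
    obtain ⟨w, rfl⟩ := hs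
    refine ⟨w, ?_⟩
    have : (⇑a⁻¹) '' ((⇑a) '' G.neighborSet w) = G.neighborSet w := by
      rw [← Set.image_comp]
      simp
    rw [← this, hsv]

/-- The permutation matrix of q: the i-th column is the standard basis vector e_{q(i)}. -/
def permMat {n : ℕ} (q : Equiv.Perm (Fin n)) : Matrix (Fin n) (Fin n) ℚ :=
  Matrix.of fun i j => if i = q j then 1 else 0

lemma mul_permMat_apply {n : ℕ} (G : SimpleGraph (Fin n)) [DecidableRel G.Adj]
    (ψ : Equiv.Perm (Fin n)) (i j : Fin n) :
    (G.adjMatrix ℚ * permMat ψ) i j = G.adjMatrix ℚ i (ψ j) := by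
  simp [Matrix.mul_apply, permMat, mul_ite]

lemma adj_of_matrix_eq {n : ℕ} (G : SimpleGraph (Fin n)) [DecidableRel G.Adj]
    (ψ : Equiv.Perm (Fin n)) (G' : SimpleGraph (Fin n)) (inst : DecidableRel G'.Adj)
    (hG' : @SimpleGraph.adjMatrix ℚ (Fin n) G' inst _ _ = G.adjMatrix ℚ * permMat ψ)
    (i j : Fin n) : G'.Adj i j ↔ G.Adj i (ψ j) := by
  have h := congrFun (congrFun hG' i) j
  rw [mul_permMat_apply] at h
  by_cases h1 : G'.Adj i j <;> by_cases h2 : G.Adj i (ψ j) <;>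
    simp_all [SimpleGraph.adjMatrix_apply]

/-- For a reduced graph Γ on {1,…,n} with adjacency matrix A and a permutation ψ:
there exists a simple graph with adjacency matrix A · m_ψ iff ψ is an antimorphism of Γ
(ψ ∈ Aut^π(Γ) with γ(ψ) = ψ⁻¹) mapping every vertex outside its neighborhood;
moreover any such graph is reduced and two-fold isomorphic to Γ. -/
theorem stmt_18 {n : ℕ} (G : SimpleGraph (Fin n)) [DecidableRel G.Adj]
    (hred : Reduced G)
    (γ : autPi G → autPi G)
    (hγ : ∀ (π : autPi G) (v : Fin n),
      (π : Equiv.Perm (Fin n)) '' G.neighborSet v =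
        G.neighborSet ((γ π : Equiv.Perm (Fin n)) v))
    (ψ : Equiv.Perm (Fin n)) :
    ((∃ (G' : SimpleGraph (Fin n)) (inst : DecidableRel G'.Adj),
        @SimpleGraph.adjMatrix ℚ (Fin n) G' inst _ _ = G.adjMatrix ℚ * permMat ψ) ↔
      ((∃ hψ : ψ ∈ autPi G, γ ⟨ψ, hψ⟩ = (⟨ψ, hψ⟩ : autPi G)⁻¹) ∧
        ∀ v : Fin n, ¬ G.Adj v (ψ v))) ∧
    (∀ (G' : SimpleGraph (Fin n)) (inst : DecidableRel G'.Adj),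
      @SimpleGraph.adjMatrix ℚ (Fin n) G' inst _ _ = G.adjMatrix ℚ * permMat ψ →
      Reduced G' ∧
        ∃ π₁ π₂ : Equiv.Perm (Fin n),
          ∀ v w : Fin n, G.Adj v w ↔ G'.Adj (π₁ v) (π₂ w)) := by

  have key : ∀ (G' : SimpleGraph (Fin n)) (inst : DecidableRel G'.Adj),
      @SimpleGraph.adjMatrix ℚ (Fin n) G' inst _ _ = G.adjMatrix ℚ * permMat ψ →
      ∀ i j, G'.Adj i j ↔ G.Adj i (ψ j) := fun G' inst h => adj_of_matrix_eq G ψ G' inst h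
  constructor
  · constructor
    · rintro ⟨G', inst, hG'⟩
      have hadj := key G' inst hG'
      have hsymm : ∀ i j, G.Adj i (ψ j) ↔ G.Adj j (ψ i) := by
        intro i j
        rw [← hadj, ← hadj]
        exact ⟨fun h => h.symm, fun h => h.symm⟩
      have hnbr : ∀ v, ⇑ψ '' G.neighborSet v = G.neighborSet (ψ⁻¹ v) := by
        intro v
        ext u
        simp only [Set.mem_image, mem_neighborSet]
        constructor
        · rintro ⟨x, hx, rfl⟩
          have h := (hsymm (ψ⁻¹ v) x).mpr
          simp only [Equiv.Perm.coe_inv, Equiv.apply_symm_apply] at h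
          exact h hx.symm
        · intro hu
          refine ⟨ψ⁻¹ u, ?_, by simp⟩
          have h := (hsymm (ψ⁻¹ u) (ψ⁻¹ v)).mpr
          simp only [Equiv.Perm.coe_inv, Equiv.apply_symm_apply] at h
          exact (h hu).symm
      have hψ : ψ ∈ autPi G := fun v => ⟨ψ⁻¹ v, hnbr v⟩
      refine ⟨⟨hψ, ?_⟩, fun v => by
        have := (hadj v v).not.mp (G'.loopless.irrefl v); exact this⟩
      apply Subtype.ext
      apply Equiv.ext
      intro v
      have h1 := hγ ⟨ψ, hψ⟩ v
      simp only at h1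
      rw [hnbr v] at h1
      have := hred _ _ h1.symm
      simpa using this
    · rintro ⟨⟨hψ, hγψ⟩, hloop⟩
      have hnbr : ∀ v, ⇑ψ '' G.neighborSet v = G.neighborSet (ψ⁻¹ v) := by
        intro v
        have h1 := hγ ⟨ψ, hψ⟩ v
        rw [hγψ] at h1
        simpa using h1
      have hsymm : ∀ i j, G.Adj i (ψ j) → G.Adj j (ψ i) := by
        intro i j hij
        have h1 := hnbr (ψ i)
        simp only [Equiv.Perm.coe_inv, Equiv.symm_apply_apply] at h1
        have : ψ j ∈ G.neighborSet i := hij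
        rw [← h1] at this
        obtain ⟨x, hx, hxe⟩ := this
        have : x = j := ψ.injective hxe
        subst this
        exact hx.symm
      refine ⟨SimpleGraph.mk (fun i j => G.Adj i (ψ j)) ?_ ?_, fun i j => ‹DecidableRel G.Adj› i (ψ j), ?_⟩
      · constructor; intro i j h; exact hsymm i j h
      · constructor; intro v h; exact hloop v h
      · ext i j
        rw [mul_permMat_apply]
        simp [SimpleGraph.adjMatrix_apply]
  · intro G' inst hG'
    have hadj := key G' inst hG'
    constructor
    · intro u v h
      apply hred u v
      ext x
      simp only [mem_neighborSet]
      have h1 : (ψ⁻¹ x ∈ G'.neighborSet u ↔ ψ⁻¹ x ∈ G'.neighborSet v) := by rw [h]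
      simpa only [mem_neighborSet, hadj, Equiv.Perm.coe_inv, Equiv.apply_symm_apply] using h1
    · refine ⟨Equiv.refl _, ψ⁻¹, fun v w => ?_⟩
      rw [hadj]
      simp
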